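/- In a Unique Forward EOPL instance, if no UFV1 violation and no UFV2 violation exists, then the UF1 solution is unique: there is exactly one node v with S(v) ≠ v and (S(S(v)) = S(v) or c(S(v)) ≤ c(v)). -/
import Mathlib

/-- In a Unique Forward EOPL instance with no UFV1 violation and no UFV2 violation, the
UF1 solution is unique: there is exactly one `v` with `S(v) ≠ v` and
(`S(S(v)) = S(v)` or `c(S(v)) ≤ c(v)`). -/
theorem uf1_unique_of_no_violations
    (d : ℕ) (hd : 0 < d)
    (S : (Fin d → Bool) → (Fin d → Bool)) (c : (Fin d → Bool) → ℕ)
    (hS : S (fun _ => false) ≠ (fun _ => false))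
    (hc : c (fun _ => false) = 0)
    (hUFV1 : ¬ ∃ v w : Fin d → Bool, v ≠ w ∧ S v ≠ v ∧ S w ≠ w ∧
      (c v = c w ∨ (c v < c w ∧ c w < c (S v))))
    (hUFV2 : ¬ ∃ v w : Fin d → Bool, v ≠ w ∧
      (S v ≠ v ∧ (S (S v) = S v ∨ c (S v) ≤ c v)) ∧ S w ≠ w ∧ c v < c w) :
    ∃! v : Fin d → Bool, S v ≠ v ∧ (S (S v) = S v ∨ c (S v) ≤ c v) := by
  -- existence: take a node of maximal cost
  have hne : (Finset.univ.filter (fun v : Fin d → Bool => S v ≠ v)).Nonempty :=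
    ⟨fun _ => false, by simp [hS]⟩
  obtain ⟨v, hv, hmax⟩ := Finset.exists_max_image _ c hne
  simp only [Finset.mem_filter, Finset.mem_univ, true_and] at hv
  have hvsol : S v ≠ v ∧ (S (S v) = S v ∨ c (S v) ≤ c v) := by
    refine ⟨hv, ?_⟩
    by_cases h : S (S v) = S v
    · exact Or.inl h
    · exact Or.inr (hmax (S v) (by simp [h]))
  refine ⟨v, hvsol, ?_⟩
  intro w hw
  by_contra hne'
  rcases lt_trichotomy (c w) (c v) with h | h | h
  · exact hUFV2 ⟨w, v, hne', hw, hvsol.1, h⟩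
  · exact hUFV1 ⟨w, v, hne', hw.1, hvsol.1, Or.inl h⟩
  · exact hUFV2 ⟨v, w, fun e => hne' e.symm, hvsol, hw.1, h⟩
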